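/- For every n ≥ 0 and every list of linear types A_k,…,A_0 with k ≥ n, the variable y admits the weighted judgment y : [𝕋ₙ] ⊢^w y : 𝕋ₙ for some weight w ≥ (2n+1)·X, where 𝕋₀ = [ [] → A₀ ] and 𝕋_{m+1} = [ [A_m] → A_{m+1}, [𝕋_m] ]. -/

import Mathlib

/-! # Tree intersection types -/

mutual
/-- Linear types: `A ::= ⋆ | T → A`. -/
inductive LinTy : Type where
  | star : LinTy
  | arr : TreeTy → LinTy → LinTy
/-- Generic types: linear types or tree types. -/
inductive GenTy : Type where
  | lin : LinTy → GenTy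
  | tree : TreeTy → GenTy
/-- Tree types: finite sequences of generic types. -/
inductive TreeTy : Type where
  | node : List GenTy → TreeTy
end

mutual
/-- Leaves of a generic type. -/
def GenTy.leaves : GenTy → List LinTy
  | .lin A => [A]
  | .tree T => TreeTy.leaves T
  termination_by g => sizeOf g
/-- Leaves extraction on tree types. -/
def TreeTy.leaves : TreeTy → List LinTy
  | .node gs => gs.attach.flatMap (fun g => GenTy.leaves g.1)
  termination_by T => sizeOf T
  decreasing_by simp_wf; have := List.sizeOf_lt_of_mem g.2; omega
end

/-- Concatenation `⊎` of tree types (sequences). -/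
def TreeTy.cat : TreeTy → TreeTy → TreeTy
  | .node a, .node b => .node (a ++ b)

mutual
/-- Weight (size) of a linear type, with parameter `X`. -/
def LinTy.weight (X : ℕ) : LinTy → ℕ
  | .star => 0
  | .arr T A => max (TreeTy.weight X T) (LinTy.weight X A + 1)
  termination_by A => sizeOf A
def GenTy.weight (X : ℕ) : GenTy → ℕ
  | .lin A => LinTy.weight X A
  | .tree T => TreeTy.weight X T
  termination_by g => sizeOf g
def TreeTy.weight (X : ℕ) : TreeTy → ℕ
  | .node gs => X + (gs.attach.map (fun g => GenTy.weight X g.1)).foldr max 0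
  termination_by T => sizeOf T
  decreasing_by simp_wf; have := List.sizeOf_lt_of_mem g.2; omega
end

mutual
/-- Hereditary absence of empty sequences (every leaf context ends in `⋆`). -/
inductive LinTy.Good : LinTy → Prop where
  | star : LinTy.Good .star
  | arr {T A} : TreeTy.Good T → LinTy.Good A → LinTy.Good (.arr T A)
inductive GenTy.Good : GenTy → Prop where
  | lin {A} : LinTy.Good A → GenTy.Good (.lin A)
  | tree {T} : TreeTy.Good T → GenTy.Good (.tree T)
inductive TreeTy.Good : TreeTy → Prop where
  | node {gs : List GenTy} : gs ≠ [] → (∀ g ∈ gs, GenTy.Good g) → TreeTy.Good (.node gs)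
end

/-! ## Leaf contexts -/

/-- One-hole contexts into tree types whose hole sits at a leaf position. -/
inductive LeafCtx : Type where
  | here (l r : List GenTy) : LeafCtx
  | deeper (l : List GenTy) (L : LeafCtx) (r : List GenTy) : LeafCtx

/-- Plugging a linear type into a leaf context. -/
def LeafCtx.plug : LeafCtx → LinTy → TreeTy
  | .here l r, A => .node (l ++ .lin A :: r)
  | .deeper l L r, A => .node (l ++ .tree (L.plug A) :: r)

/-- Number of leaves strictly to the left of the hole. -/
def LeafCtx.holeIdx : LeafCtx → ℕ
  | .here l _ => (TreeTy.node l).leaves.length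
  | .deeper l L _ => (TreeTy.node l).leaves.length + L.holeIdx

/-! ## Type contexts -/

mutual
/-- Linear type contexts: `𝕃c ::= ⟨·⟩ | T → 𝕃c | 𝕋 → A`. -/
inductive LinCtx : Type where
  | hole : LinCtx
  | arrR : TreeTy → LinCtx → LinCtx
  | arrL : TreeCtx → LinTy → LinCtx
/-- Tree type contexts. -/
inductive TreeCtx : Type where
  | node : List GenTy → GenCtx → List GenTy → TreeCtx
/-- Generic type contexts. -/
inductive GenCtx : Type where
  | lin : LinCtx → GenCtx
  | tree : TreeCtx → GenCtx
end

mutual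
def LinCtx.plug : LinCtx → LinTy → LinTy
  | .hole, B => B
  | .arrR T C, B => .arr T (C.plug B)
  | .arrL C A, B => .arr (C.plug B) A
def TreeCtx.plug : TreeCtx → LinTy → TreeTy
  | .node l C r, B => .node (l ++ C.plug B :: r)
def GenCtx.plug : GenCtx → LinTy → GenTy
  | .lin C, B => .lin (C.plug B)
  | .tree C, B => .tree (C.plug B)
end

mutual
/-- Branch size of a linear type context. -/
def LinCtx.bsize (X : ℕ) : LinCtx → ℕ
  | .hole => 0
  | .arrR _ C => 1 + C.bsize X
  | .arrL C _ => C.bsize X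
def TreeCtx.bsize (X : ℕ) : TreeCtx → ℕ
  | .node _ C _ => X + C.bsize X
def GenCtx.bsize (X : ℕ) : GenCtx → ℕ
  | .lin C => C.bsize X
  | .tree C => C.bsize X
end

/-! # λ-terms (de Bruijn) and Closed Call-by-Name -/

inductive Term : Type where
  | var : ℕ → Term
  | lam : Term → Term
  | app : Term → Term → Term

/-- Shifting of free indices `≥ c` by `d`. -/
def Term.lift (d : ℕ) : ℕ → Term → Term
  | c, .var n => if n < c then .var n else .var (n + d)
  | c, .lam t => .lam (Term.lift d (c+1) t)
  | c, .app t u => .app (Term.lift d c t) (Term.lift d c u)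

/-- Capture-avoiding substitution of `u` for index `k`. -/
def Term.subst (u : Term) : ℕ → Term → Term
  | k, .var n => if n = k then Term.lift k 0 u else if k < n then .var (n-1) else .var n
  | k, .lam t => .lam (Term.subst u (k+1) t)
  | k, .app t s => .app (Term.subst u k t) (Term.subst u k s)

/-- `t{x₀ := u}`. -/
def Term.subst0 (t u : Term) : Term := Term.subst u 0 t

def Term.ClosedUnder : Term → ℕ → Prop
  | .var n, k => n < k
  | .lam t, k => t.ClosedUnder (k+1)
  | .app t u, k => t.ClosedUnder k ∧ u.ClosedUnder k

/-- Closed terms: no free variables. -/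
def Term.Closed (t : Term) : Prop := t.ClosedUnder 0

/-- Occurrence of a free variable. -/
def Term.FreeIn : Term → ℕ → Prop
  | .var n, x => n = x
  | .lam t, x => t.FreeIn (x+1)
  | .app t u, x => t.FreeIn x ∨ u.FreeIn x

/-- Weak head reduction `(λy.t)u r₁…r_h →wh t{y:=u} r₁…r_h`. -/
inductive Whr : Term → Term → Prop where
  | beta (t u : Term) : Whr (.app (.lam t) u) (t.subst0 u)
  | appL {t t' : Term} (u : Term) : Whr t t' → Whr (.app t u) (.app t' u)

/-- `n`-step weak head reduction. -/
inductive WhN : ℕ → Term → Term → Prop where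
  | refl (t : Term) : WhN 0 t t
  | step {n t u v} : Whr t u → WhN n u v → WhN (n+1) t v

/-! # Type environments and the tree type system -/

/-- Type environments: maps from (de Bruijn) variables to tree types. -/
def Env : Type := ℕ → TreeTy

def Env.empty : Env := fun _ => .node []

/-- Pointwise concatenation `Γ ⊎ Δ`. -/
def Env.union (Γ Δ : Env) : Env := fun x => (Γ x).cat (Δ x)

/-- Environment of the variable axiom: `x : [A]`. -/
def Env.single (x : ℕ) (A : LinTy) : Env :=
  fun y => if y = x then .node [.lin A] else .node []

/-- Environment extension `Γ, x₀:T` (de Bruijn cons). -/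
def Env.cons (T : TreeTy) (Γ : Env) : Env
  | 0 => T
  | n+1 => Γ n

/-- Wrap a (non-empty) tree type in one extra sequence layer. -/
def TreeTy.wrap : TreeTy → TreeTy
  | .node [] => .node []
  | T => .node [.tree T]

/-- `[Γ]`: wrap each (non-empty) type of the environment in one extra layer. -/
def Env.wrap (Γ : Env) : Env := fun x => (Γ x).wrap

/-- Finite union of environments. -/
def Env.unionF {n : ℕ} (Γs : Fin n → Env) : Env :=
  (List.ofFn Γs).foldr Env.union Env.empty

/-- Tree type derivations. -/
inductive Deriv : Env → Term → GenTy → Type where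
  | var (x : ℕ) (A : LinTy) : Deriv (Env.single x A) (.var x) (.lin A)
  | lam {Γ : Env} {T : TreeTy} {t : Term} {A : LinTy} :
      Deriv (Env.cons T Γ) t (.lin A) → Deriv Γ (.lam t) (.lin (.arr T A))
  | lamStar (t : Term) : Deriv Env.empty (.lam t) (.lin .star)
  | app {Γ Δ : Env} {t u : Term} {T : TreeTy} {A : LinTy} :
      Deriv Γ t (.lin (.arr T A)) → Deriv Δ u (.tree T) →
      Deriv (Env.union Γ Δ) (.app t u) (.lin A)
  | many {t : Term} (n : ℕ) (Γs : Fin n → Env) (Gs : Fin n → GenTy)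
      (prems : ∀ i, Deriv (Γs i) t (Gs i)) :
      Deriv (Env.wrap (Env.unionF Γs)) t (.tree (.node (List.ofFn Gs)))
  | none (t : Term) : Deriv Env.empty t (.tree (.node []))

/-- Size of a derivation: number of rules that are not T-many/T-none. -/
def Deriv.size : ∀ {Γ t G}, Deriv Γ t G → ℕ
  | _, _, _, .var _ _ => 1
  | _, _, _, .lam π => π.size + 1
  | _, _, _, .lamStar _ => 1
  | _, _, _, .app π ρ => π.size + ρ.size + 1
  | _, _, _, .many n _ _ prems => ∑ i : Fin n, (prems i).size
  | _, _, _, .none _ => 0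

/-- Weight of a weighted derivation, with parameter `X`. -/
def Deriv.weight (X : ℕ) : ∀ {Γ t G}, Deriv Γ t G → ℕ
  | _, _, _, .var _ A => A.weight X
  | _, _, _, .lam (T := T) (A := A) π => max (π.weight X) (LinTy.weight X (.arr T A))
  | _, _, _, .lamStar _ => 0
  | _, _, _, .app π ρ => max (π.weight X) (ρ.weight X)
  | _, _, _, .many n _ _ prems => X + (Finset.univ.sup fun i => (prems i).weight X)
  | _, _, _, .none _ => 0

/-- `SubD π n π'`: the judgment of `π'` occurs in `π`, crossing `n` T-many rules
descending from it to the root. -/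
inductive SubD : ∀ {Γ t G}, Deriv Γ t G → ℕ → ∀ {Γ' u G'}, Deriv Γ' u G' → Prop where
  | refl {Γ t G} (π : Deriv Γ t G) : SubD π 0 π
  | lam {Γ T t A} {π : Deriv (Env.cons T Γ) t (.lin A)} {n} {Γ' u G'} {π' : Deriv Γ' u G'} :
      SubD π n π' → SubD (Deriv.lam π) n π'
  | appL {Γ Δ t u T A} {π : Deriv Γ t (.lin (.arr T A))} {ρ : Deriv Δ u (.tree T)}
      {n} {Γ' v G'} {π' : Deriv Γ' v G'} :
      SubD π n π' → SubD (Deriv.app π ρ) n π'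
  | appR {Γ Δ t u T A} {π : Deriv Γ t (.lin (.arr T A))} {ρ : Deriv Δ u (.tree T)}
      {n} {Γ' v G'} {π' : Deriv Γ' v G'} :
      SubD ρ n π' → SubD (Deriv.app π ρ) n π'
  | many {t k} {Γs : Fin k → Env} {Gs : Fin k → GenTy} {prems : ∀ i, Deriv (Γs i) t (Gs i)}
      (i : Fin k) {n} {Γ' u G'} {π' : Deriv Γ' u G'} :
      SubD (prems i) n π' → SubD (Deriv.many k Γs Gs prems) (n+1) π'

/-- The sparse tree types of Turing's fixed-point combinator:
`𝕋₀ = [ [] → A₀ ]` and `𝕋_{n+1} = [ [Aₙ] → A_{n+1}, [𝕋ₙ] ]`. -/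
def Tfam (As : ℕ → LinTy) : ℕ → TreeTy
  | 0 => .node [.lin (.arr (.node []) (As 0))]
  | n+1 => .node [.lin (.arr (.node [.lin (As n)]) (As (n+1))),
                  .tree (.node [.tree (Tfam As n)])]

/-- Environment assigning a single tree type to a single variable. -/
def Env.singleT (x : ℕ) (T : TreeTy) : Env :=
  fun y => if y = x then T else .node []

/-- Cast a derivation along equalities of environment and type. -/
def Deriv.cast {Γ Γ' : Env} {t : Term} {G G' : GenTy} (hΓ : Γ = Γ') (hG : G = G')
    (π : Deriv Γ t G) : Deriv Γ' t G' := hΓ ▸ hG ▸ π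

lemma Deriv.cast_weight {Γ Γ' : Env} {t : Term} {G G' : GenTy} (hΓ : Γ = Γ') (hG : G = G')
    (π : Deriv Γ t G) (X : ℕ) : (π.cast hΓ hG).weight X = π.weight X := by
  subst hΓ; subst hG; rfl

lemma Env.union_empty (Γ : Env) : Env.union Γ Env.empty = Γ := by
  funext x
  show (Γ x).cat (.node []) = Γ x
  cases Γ x with
  | node gs => simp [TreeTy.cat]

/-- the variable `y` admits the weighted judgment
`y : [𝕋ₙ] ⊢ y : 𝕋ₙ` at some weight `≥ (2n+1)·X`. -/
theorem var_Tfam_weight (X : ℕ) (As : ℕ → LinTy) (n : ℕ) :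
    ∃ π : Deriv (Env.singleT 0 (TreeTy.node [.tree (Tfam As n)])) (.var 0)
        (.tree (Tfam As n)),
      (2*n+1) * X ≤ π.weight X := by
  induction n with
  | zero =>
    set A : LinTy := .arr (.node []) (As 0) with hA
    have hΓ : Env.wrap (Env.unionF (fun _ : Fin 1 => Env.single 0 A))
        = Env.singleT 0 (TreeTy.node [.tree (Tfam As 0)]) := by
      have h1 : Env.unionF (fun _ : Fin 1 => Env.single 0 A) = Env.single 0 A := by
        simp [Env.unionF, List.ofFn_succ, Env.union_empty]
      rw [h1]
      funext x
      cases x with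
      | zero => rfl
      | succ k => rfl
    have hG : GenTy.tree (.node (List.ofFn (fun _ : Fin 1 => GenTy.lin A)))
        = .tree (Tfam As 0) := by
      simp [Tfam, List.ofFn_succ, hA]
    refine ⟨Deriv.cast hΓ hG
      (Deriv.many 1 (fun _ => Env.single 0 A) (fun _ => .lin A)
        (fun _ => Deriv.var 0 A)), ?_⟩
    rw [Deriv.cast_weight]
    show 1 * X ≤ X + _
    simp
  | succ n ih =>
    obtain ⟨πn, hπn⟩ := ih
    set B : LinTy := .arr (.node [.lin (As n)]) (As (n+1)) with hB
    -- inner many: y : [[𝕋ₙ]] ⊢ y : [𝕋ₙ]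
    have hΓ2 : Env.wrap (Env.unionF
          (fun _ : Fin 1 => Env.singleT 0 (TreeTy.node [.tree (Tfam As n)])))
        = Env.singleT 0 (TreeTy.node [.tree (.node [.tree (Tfam As n)])]) := by
      have h1 : Env.unionF (fun _ : Fin 1 => Env.singleT 0 (TreeTy.node [.tree (Tfam As n)]))
          = Env.singleT 0 (TreeTy.node [.tree (Tfam As n)]) := by
        simp [Env.unionF, List.ofFn_succ, Env.union_empty]
      rw [h1]
      funext x
      cases x with
      | zero => rfl
      | succ k => rfl
    have hG2 : GenTy.tree (.node (List.ofFn (fun _ : Fin 1 => GenTy.tree (Tfam As n))))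
        = .tree (.node [.tree (Tfam As n)]) := by
      simp [List.ofFn_succ]
    set π2 : Deriv (Env.singleT 0 (TreeTy.node [.tree (.node [.tree (Tfam As n)])]))
        (.var 0) (.tree (.node [.tree (Tfam As n)])) :=
      Deriv.cast hΓ2 hG2
        (Deriv.many 1 (fun _ => Env.singleT 0 (TreeTy.node [.tree (Tfam As n)]))
          (fun _ => .tree (Tfam As n)) (fun _ => πn)) with hπ2
    have hw2 : 2 * n + 1 + 1 ≤ 1 → True := fun _ => trivial
    have hπ2w : (2*n+1) * X + X ≤ π2.weight X := by
      rw [hπ2, Deriv.cast_weight]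
      show _ ≤ X + _
      have hsup : (Finset.univ.sup fun i : Fin 1 => Deriv.weight X ((fun _ => πn) i))
          = πn.weight X := by simp
      rw [hsup]; omega
    -- outer many with two premises
    set Γs : Fin 2 → Env := Fin.cons (Env.single 0 B)
      (fun _ => Env.singleT 0 (TreeTy.node [.tree (.node [.tree (Tfam As n)])])) with hΓs
    set Gs : Fin 2 → GenTy :=
      Fin.cons (.lin B) (fun _ => .tree (.node [.tree (Tfam As n)])) with hGs
    set prems : ∀ i, Deriv (Γs i) (.var 0) (Gs i) :=
      (fun i => Fin.cases (Deriv.var 0 B) (fun _ => π2) i) with hprems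
    have hΓ : Env.wrap (Env.unionF Γs)
        = Env.singleT 0 (TreeTy.node [.tree (Tfam As (n+1))]) := by
      funext x
      have h1 : Env.unionF Γs
          = Env.union (Γs 0) (Env.union (Γs 1) Env.empty) := by
        simp [Env.unionF, List.ofFn_succ]
      rw [h1, Env.union_empty]
      cases x with
      | zero => rfl
      | succ k => rfl
    have hG : GenTy.tree (.node (List.ofFn Gs)) = .tree (Tfam As (n+1)) := by
      simp [hGs, List.ofFn_succ, Tfam, Fin.cons_zero, Fin.cons_succ, hB]
    refine ⟨Deriv.cast hΓ hG (Deriv.many 2 Γs Gs prems), ?_⟩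
    rw [Deriv.cast_weight]
    show _ ≤ X + Finset.univ.sup fun i => (prems i).weight X
    have h1 : (prems 1).weight X ≤ Finset.univ.sup fun i => (prems i).weight X :=
      Finset.le_sup (f := fun i => (prems i).weight X) (Finset.mem_univ 1)
    have h2 : (prems 1).weight X = π2.weight X := rfl
    have : (2*(n+1)+1) * X = (2*n+1) * X + X + X := by ring
    omega
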